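/- Let X be a complete ultrametric space satisfying: (1) the set of balls of nonzero diameter in X is countable; (2) for every sequence of balls D_k with D_{k+1} ⊊ D_k for all k, the diameters of D_k tend to zero; (3) every ball of nonzero diameter is the union of finitely many of its maximal proper subballs. Let ν be a Borel measure on X that is finite on every ball, and suppose the supremum of ν(B) over all balls B of X is infinite (X contains an increasing sequence of balls of measure tending to infinity). Then the closed linear span in L²(X,ν) of the union of the subspaces V⁰_B, where B ranges over all balls of nonzero diameter, is the whole space L²(X,ν). -/

import Mathlib

open MeasureTheory

/-- A ball in a metric space: a closed ball of nonnegative radius. -/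
def IsBall {X : Type*} [MetricSpace X] (B : Set X) : Prop :=
  ∃ (z : X) (r : ℝ), 0 ≤ r ∧ B = Metric.closedBall z r

/-- `B'` is a maximal proper subball of `B`. -/
def IsMaxSubball {X : Type*} [MetricSpace X] (B' B : Set X) : Prop :=
  IsBall B' ∧ B' ⊂ B ∧ ∀ B'' : Set X, IsBall B'' → ¬ (B' ⊂ B'' ∧ B'' ⊂ B)

/-- `V⁰_B`: elements of `L²(X,ν)` that are a.e. equal to a finite linear
combination of indicator functions of maximal proper subballs of `B` and have
zero mean. -/
def V0 {X : Type*} [MetricSpace X] [MeasurableSpace X] (ν : Measure X) (B : Set X) :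
    Set (MeasureTheory.Lp ℂ 2 ν) :=
  {f | (∃ (F : Finset (Set X)) (c : Set X → ℂ),
          (∀ C ∈ F, IsMaxSubball C B) ∧
          ∀ᵐ x ∂ν, f x = ∑ C ∈ F, c C * Set.indicator C (fun _ => (1 : ℂ)) x) ∧
       ∫ x, f x ∂ν = 0}

open Metric
set_option linter.unusedSectionVars false
set_option linter.unusedVariables false

section Aux

variable {X : Type*} [MetricSpace X]

section
variable (hultra : ∀ x y z : X, dist x y ≤ max (dist x z) (dist z y))
include hultra

lemma ball_eq_of_mem' {B : Set X} (hB : IsBall B) {x : X} (hx : x ∈ B) :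
    ∃ r : ℝ, 0 ≤ r ∧ B = Metric.closedBall x r := by
  obtain ⟨z, r, hr, rfl⟩ := hB
  rw [Metric.mem_closedBall] at hx
  refine ⟨r, hr, Set.Subset.antisymm ?_ ?_⟩ <;> intro y hy <;>
    rw [Metric.mem_closedBall] at hy ⊢
  · exact le_trans (hultra y x z) (max_le hy (by rw [dist_comm]; exact hx))
  · exact le_trans (hultra y z x) (max_le hy hx)

lemma ball_nested {B C : Set X} (hB : IsBall B) (hC : IsBall C)
    (hne : (B ∩ C).Nonempty) : B ⊆ C ∨ C ⊆ B := by
  obtain ⟨x, hxB, hxC⟩ := hne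
  obtain ⟨r, hr, rfl⟩ := ball_eq_of_mem' hultra hB hxB
  obtain ⟨s, hs, rfl⟩ := ball_eq_of_mem' hultra hC hxC
  rcases le_total r s with h | h
  · exact Or.inl (Metric.closedBall_subset_closedBall h)
  · exact Or.inr (Metric.closedBall_subset_closedBall h)

end

lemma ball_nonempty {B : Set X} (hB : IsBall B) : B.Nonempty := by
  obtain ⟨z, r, hr, rfl⟩ := hB
  exact ⟨z, Metric.mem_closedBall_self hr⟩

lemma ball_isClosed {B : Set X} (hB : IsBall B) : IsClosed B := by
  obtain ⟨z, r, hr, rfl⟩ := hB; exact Metric.isClosed_closedBall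

lemma ball_bounded {B : Set X} (hB : IsBall B) : Bornology.IsBounded B := by
  obtain ⟨z, r, hr, rfl⟩ := hB; exact Metric.isBounded_closedBall

lemma isPiSystem_balls (hultra : ∀ x y z : X, dist x y ≤ max (dist x z) (dist z y)) :
    IsPiSystem {B : Set X | IsBall B} := by
  intro s hs t ht hne
  rcases ball_nested hultra hs ht hne with h | h
  · rwa [Set.inter_eq_self_of_subset_left h]
  · rwa [Set.inter_eq_self_of_subset_right h]


variable {X : Type*} [MetricSpace X]

section
variable (hultra : ∀ x y z : X, dist x y ≤ max (dist x z) (dist z y))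
include hultra

/-- a ball strictly contained in `B` is contained in some member of a maximal-subball cover -/
lemma subball_le_mem_cover {B C : Set X} {F : Finset (Set X)}
    (hF : ∀ C' ∈ F, IsMaxSubball C' B) (hcov : B = ⋃ C' ∈ F, C')
    (hC : IsBall C) (hCB : C ⊂ B) : ∃ C' ∈ F, C ⊆ C' := by
  obtain ⟨x, hx⟩ := ball_nonempty hC
  have hxB : x ∈ B := hCB.1 hx
  rw [hcov] at hxB
  simp only [Set.mem_iUnion] at hxB
  obtain ⟨C', hC'F, hxC'⟩ := hxB
  refine ⟨C', hC'F, ?_⟩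
  rcases ball_nested hultra hC (hF C' hC'F).1 ⟨x, hx, hxC'⟩ with h | h
  · exact h
  · rcases eq_or_ssubset_of_subset h with h' | h'
    · exact h'.symm.le
    · exact absurd ⟨h', hCB⟩ ((hF C' hC'F).2.2 C hC)

/-- any maximal subball belongs to any maximal-subball cover -/
lemma maxSubball_mem_cover {B C : Set X} {F : Finset (Set X)}
    (hF : ∀ C' ∈ F, IsMaxSubball C' B) (hcov : B = ⋃ C' ∈ F, C')
    (hC : IsMaxSubball C B) : C ∈ F := by
  obtain ⟨C', hC'F, hsub⟩ := subball_le_mem_cover hultra hF hcov hC.1 hC.2.1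
  rcases eq_or_ssubset_of_subset hsub with h | h
  · rwa [h]
  · exact absurd ⟨h, (hF C' hC'F).2.1⟩ (hC.2.2 C' (hF C' hC'F).1)

/-- distinct maximal subballs are disjoint -/
lemma maxSubball_disjoint {B C₁ C₂ : Set X} (h₁ : IsMaxSubball C₁ B)
    (h₂ : IsMaxSubball C₂ B) (hne : C₁ ≠ C₂) : Disjoint C₁ C₂ := by
  rw [Set.disjoint_iff_inter_eq_empty]
  by_contra h
  rcases ball_nested hultra h₁.1 h₂.1 (Set.nonempty_iff_ne_empty.mpr h) with hs | hs
  · rcases eq_or_ssubset_of_subset hs with h' | h'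
    · exact hne h'
    · exact (h₁.2.2 C₂ h₂.1) ⟨h', h₂.2.1⟩
  · rcases eq_or_ssubset_of_subset hs with h' | h'
    · exact hne h'.symm
    · exact (h₂.2.2 C₁ h₁.1) ⟨h', h₁.2.1⟩

/-- two balls are contained in a common ball -/
lemma exists_ball_superset {B C : Set X} (hB : IsBall B) (hC : IsBall C) :
    ∃ D : Set X, IsBall D ∧ B ⊆ D ∧ C ⊆ D := by
  obtain ⟨z, r, hr, rfl⟩ := hB
  obtain ⟨w, s, hs, rfl⟩ := hC
  refine ⟨Metric.closedBall z (max r (max s (dist z w))), ⟨z, _, by positivity, rfl⟩,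
    Metric.closedBall_subset_closedBall (le_max_left _ _), ?_⟩
  intro y hy
  rw [Metric.mem_closedBall] at hy ⊢
  calc dist y z ≤ max (dist y w) (dist w z) := hultra y z w
    _ ≤ max s (dist z w) := by
        rw [dist_comm w z]; exact max_le_max hy le_rfl
    _ ≤ _ := le_max_right _ _

end


variable {X : Type*} [MetricSpace X]

/-- a ball of zero diameter containing `x` is `{x}` -/
lemma ball_eq_singleton_of_diam_zero {B : Set X} (hB : B.Nonempty) {x : X}
    (hx : x ∈ B) (hd : Metric.diam B ≤ 0) (hbd : Bornology.IsBounded B) :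
    B = {x} := by
  apply Set.Subset.antisymm
  · intro y hy
    have : dist y x ≤ Metric.diam B := Metric.dist_le_diam_of_mem hbd hy hx
    have : dist y x = 0 := le_antisymm (this.trans hd) dist_nonneg
    simpa [Set.mem_singleton_iff] using dist_eq_zero.mp this
  · simpa using hx

lemma point_mem_posdiam_ball {x y : X} (hxy : y ≠ x) :
    ∃ B : Set X, (IsBall B ∧ 0 < Metric.diam B) ∧ x ∈ B := by
  refine ⟨Metric.closedBall x (dist x y), ⟨⟨x, _, dist_nonneg, rfl⟩, ?_⟩,
    Metric.mem_closedBall_self dist_nonneg⟩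
  have hy : y ∈ Metric.closedBall x (dist x y) := by
    rw [Metric.mem_closedBall, dist_comm]
  have hx : x ∈ Metric.closedBall x (dist x y) := Metric.mem_closedBall_self dist_nonneg
  have := Metric.dist_le_diam_of_mem Metric.isBounded_closedBall hy hx
  have hd : (0:ℝ) < dist y x := dist_pos.mpr hxy
  linarith

section
variable (hultra : ∀ x y z : X, dist x y ≤ max (dist x z) (dist z y))
    (h2 : ∀ D : ℕ → Set X, (∀ k, IsBall (D k)) → (∀ k, D (k + 1) ⊂ D k) →
      Filter.Tendsto (fun k => Metric.diam (D k)) Filter.atTop (nhds 0))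
    (h3 : ∀ B : Set X, IsBall B → 0 < Metric.diam B →
      ∃ F : Finset (Set X), (∀ C ∈ F, IsMaxSubball C B) ∧ B = ⋃ C ∈ F, C)
include hultra h2 h3

lemma isolated_singleton_maxSubball {x : X} (hiso : ∃ r > 0, Metric.closedBall x r = {x})
    (hnt : ∃ y, y ≠ x) :
    ∃ B : Set X, (IsBall B ∧ 0 < Metric.diam B) ∧ IsMaxSubball {x} B := by
  by_contra hcon
  push_neg at hcon
  set P : Set X → Prop := fun B => (IsBall B ∧ 0 < Metric.diam B) ∧ x ∈ B with hP
  have key : ∀ B, P B → ∃ B', P B' ∧ B' ⊂ B := by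
    rintro B ⟨⟨hB, hdB⟩, hxB⟩
    obtain ⟨F, hF, hcov⟩ := h3 B hB hdB
    have hxB' := hxB
    rw [hcov] at hxB'
    simp only [Set.mem_iUnion] at hxB'
    obtain ⟨C, hCF, hxC⟩ := hxB'
    have hms := hF C hCF
    rcases lt_or_ge 0 (Metric.diam C) with hd | hd
    · exact ⟨C, ⟨⟨hms.1, hd⟩, hxC⟩, hms.2.1⟩
    · exfalso
      have : C = {x} :=
        ball_eq_singleton_of_diam_zero ⟨x, hxC⟩ hxC hd (ball_bounded hms.1)
      exact hcon B ⟨hB, hdB⟩ (this ▸ hms)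
  obtain ⟨B₀, hB₀⟩ := point_mem_posdiam_ball hnt.choose_spec
  have hB₀' : P B₀ := ⟨hB₀.1, hB₀.2⟩
  let g : {B : Set X // P B} → {B : Set X // P B} := fun B =>
    ⟨(key B.1 B.2).choose, (key B.1 B.2).choose_spec.1⟩
  have hg : ∀ B, (g B).1 ⊂ B.1 := fun B => (key B.1 B.2).choose_spec.2
  let seq : ℕ → {B : Set X // P B} := fun n => g^[n] ⟨B₀, hB₀'⟩
  have hseq : ∀ n, seq (n + 1) = g (seq n) := fun n => Function.iterate_succ_apply' g n _
  have hball : ∀ n, IsBall (seq n).1 := fun n => (seq n).2.1.1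
  have hdec : ∀ n, (seq (n+1)).1 ⊂ (seq n).1 := fun n => by rw [hseq]; exact hg (seq n)
  have htend := h2 (fun n => (seq n).1) hball hdec
  obtain ⟨r, hr, hiso'⟩ := hiso
  obtain ⟨n, hn⟩ := (Filter.eventually_atTop.mp
    (Filter.Tendsto.eventually_lt htend tendsto_const_nhds hr.lt))
  have hsub : (seq n).1 ⊆ {x} := by
    intro y hy
    have hxn : x ∈ (seq n).1 := (seq n).2.2
    have : dist y x ≤ Metric.diam (seq n).1 :=
      Metric.dist_le_diam_of_mem (ball_bounded (hball n)) hy hxn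
    rw [← hiso']
    exact Metric.mem_closedBall.mpr (this.trans (hn n le_rfl).le)
  have : Metric.diam (seq n).1 = 0 := by
    have h' := Metric.diam_mono hsub (Bornology.isBounded_singleton)
    rw [Metric.diam_singleton] at h'
    exact le_antisymm h' Metric.diam_nonneg
  exact absurd this (ne_of_gt (seq n).2.1.2)

lemma isolated_countable
    (h1 : {B : Set X | IsBall B ∧ 0 < Metric.diam B}.Countable)
    (hnt : ∀ x : X, ∃ y, y ≠ x) :
    {x : X | ∃ r > 0, Metric.closedBall x r = {x}}.Countable := by
  set S : Set (Set X) :=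
    ⋃ B ∈ {B : Set X | IsBall B ∧ 0 < Metric.diam B}, {C | IsMaxSubball C B} with hS
  have hScount : S.Countable := by
    refine h1.biUnion (fun B hB => ?_)
    obtain ⟨F, hF, hcov⟩ := h3 B hB.1 hB.2
    exact (F.finite_toSet.subset (fun C hC => maxSubball_mem_cover hultra hF hcov hC)).countable
  have hsub : {x : X | ∃ r > 0, Metric.closedBall x r = {x}} ⊆
      (fun x : X => ({x} : Set X)) ⁻¹' S := by
    intro x hx
    obtain ⟨B, hB, hms⟩ := isolated_singleton_maxSubball hultra h2 h3 hx (hnt x)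
    simp only [Set.mem_preimage, hS, Set.mem_iUnion]
    exact ⟨B, hB, hms⟩
  exact (hScount.preimage (Set.singleton_injective)).mono hsub

end


variable {X : Type*} [MetricSpace X]

lemma countable_mem_generateFrom_balls {s : Set X} (hs : s.Countable) :
    MeasurableSet[MeasurableSpace.generateFrom {B : Set X | IsBall B}] s := by
  have : s = ⋃ x ∈ s, ({x} : Set X) := by simp
  rw [this]
  refine MeasurableSet.biUnion hs (fun x _ => ?_)
  refine MeasurableSpace.measurableSet_generateFrom ?_
  exact ⟨x, 0, le_rfl, by simp⟩

lemma borel_eq_generateFrom_balls [MeasurableSpace X] [BorelSpace X]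
    (h1 : {B : Set X | IsBall B ∧ 0 < Metric.diam B}.Countable)
    (hiso : {x : X | ∃ r > 0, Metric.closedBall x r = {x}}.Countable) :
    ‹MeasurableSpace X› = MeasurableSpace.generateFrom {B : Set X | IsBall B} := by
  refine le_antisymm ?_ ?_
  · rw [BorelSpace.measurable_eq (α := X), borel]
    refine MeasurableSpace.generateFrom_le (fun U hU => ?_)
    set I : Set X := {x : X | ∃ r > 0, Metric.closedBall x r = {x}} with hI
    have hdecomp : U = (⋃ B ∈ {B : Set X | (IsBall B ∧ 0 < Metric.diam B) ∧ B ⊆ U}, B)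
        ∪ (U ∩ I) := by
      apply Set.Subset.antisymm
      · intro x hx
        obtain ⟨ε, hε, hball⟩ := Metric.isOpen_iff.mp hU x hx
        have hsub : Metric.closedBall x (ε/2) ⊆ U :=
          le_trans (Metric.closedBall_subset_ball (by linarith)) hball
        rcases lt_or_ge 0 (Metric.diam (Metric.closedBall x (ε/2))) with hd | hd
        · left
          simp only [Set.mem_iUnion]
          exact ⟨_, ⟨⟨⟨x, ε/2, by positivity, rfl⟩, hd⟩, hsub⟩,
            Metric.mem_closedBall_self (by positivity)⟩
        · right
          have : Metric.closedBall x (ε/2) = {x} :=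
            ball_eq_singleton_of_diam_zero ⟨x, Metric.mem_closedBall_self (by positivity)⟩
              (Metric.mem_closedBall_self (by positivity)) hd Metric.isBounded_closedBall
          exact ⟨hx, ⟨ε/2, by positivity, this⟩⟩
      · rintro x (hx | hx)
        · simp only [Set.mem_iUnion] at hx
          obtain ⟨B, ⟨_, hBU⟩, hxB⟩ := hx
          exact hBU hxB
        · exact hx.1
    rw [hdecomp]
    refine MeasurableSet.union ?_ ?_
    · refine MeasurableSet.biUnion (h1.mono (fun B hB => hB.1)) (fun B hB => ?_)
      exact MeasurableSpace.measurableSet_generateFrom hB.1.1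
    · exact countable_mem_generateFrom_balls (hiso.mono Set.inter_subset_right)
  · refine MeasurableSpace.generateFrom_le (fun B hB => ?_)
    exact (ball_isClosed hB).measurableSet


variable {X : Type*} [MetricSpace X] [MeasurableSpace X] [BorelSpace X]

noncomputable section

lemma ball_measurableSet {B : Set X} (hB : IsBall B) : MeasurableSet B :=
  (ball_isClosed hB).measurableSet

lemma integrableOn_ball {ν : Measure X} (f : Lp ℂ 2 ν) {B : Set X} (hB : IsBall B)
    (hfin : ν B < ⊤) : IntegrableOn (f : X → ℂ) B ν := by
  haveI : IsFiniteMeasure (ν.restrict B) :=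
    ⟨by rw [Measure.restrict_apply_univ]; exact hfin⟩
  exact ((Lp.memLp f).restrict B).integrable one_le_two

/-- the indicator of a ball as an element of L², inner product with f -/
lemma inner_indicator_ball {ν : Measure X} (f : Lp ℂ 2 ν) {B : Set X}
    (hm : MeasurableSet B) (hfin : ν B ≠ ⊤) :
    (inner ℂ (indicatorConstLp 2 hm hfin (1 : ℂ)) f : ℂ) = ∫ x in B, f x ∂ν := by
  rw [L2.inner_indicatorConstLp_eq_setIntegral_inner ℂ f hm (1:ℂ) hfin]
  congr 1
  ext x
  simp [RCLike.inner_apply]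

lemma norm_setIntegral_ball_le {ν : Measure X} (f : Lp ℂ 2 ν) {B : Set X}
    (hm : MeasurableSet B) (hfin : ν B ≠ ⊤) :
    ‖∫ x in B, f x ∂ν‖ ≤ ((ν B).toReal) ^ (1/2 : ℝ) * ‖f‖ := by
  rw [← inner_indicator_ball f hm hfin]
  refine le_trans (norm_inner_le_norm _ _) ?_
  gcongr
  rw [norm_indicatorConstLp two_ne_zero ENNReal.ofNat_ne_top]
  simp [ENNReal.toReal_ofNat, measureReal_def]

section core
variable (hultra : ∀ x y z : X, dist x y ≤ max (dist x z) (dist z y))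
    {ν : Measure X} (hfin : ∀ B : Set X, IsBall B → ν B < ⊤)
    (f : Lp ℂ 2 ν)
    (hperp : ∀ B : Set X, IsBall B → 0 < Metric.diam B →
      ∀ g ∈ V0 ν B, (inner ℂ g f : ℂ) = 0)

include hultra hfin hperp

lemma key_pair {B C₁ C₂ : Set X} (hB : IsBall B) (hd : 0 < Metric.diam B)
    (h₁ : IsMaxSubball C₁ B) (h₂ : IsMaxSubball C₂ B) :
    ((ν C₂).toReal : ℂ) * ∫ x in C₁, f x ∂ν
      = ((ν C₁).toReal : ℂ) * ∫ x in C₂, f x ∂ν := by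
  classical
  rcases eq_or_ne C₁ C₂ with rfl | hne
  · ring
  have hm₁ := ball_measurableSet h₁.1
  have hm₂ := ball_measurableSet h₂.1
  have hf₁ := (hfin C₁ h₁.1).ne
  have hf₂ := (hfin C₂ h₂.1).ne
  set a : ℂ := ((ν C₂).toReal : ℂ) with ha
  set b : ℂ := -((ν C₁).toReal : ℂ) with hb
  set g : Lp ℂ 2 ν := a • indicatorConstLp 2 hm₁ hf₁ (1 : ℂ)
      + b • indicatorConstLp 2 hm₂ hf₂ (1 : ℂ) with hg
  have hcoe : (g : X → ℂ) =ᵐ[ν]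
      fun x => a * Set.indicator C₁ (fun _ => (1:ℂ)) x
        + b * Set.indicator C₂ (fun _ => (1:ℂ)) x := by
    filter_upwards [Lp.coeFn_add (a • indicatorConstLp 2 hm₁ hf₁ (1 : ℂ))
        (b • indicatorConstLp 2 hm₂ hf₂ (1 : ℂ)),
      Lp.coeFn_smul a (indicatorConstLp 2 hm₁ hf₁ (1 : ℂ)),
      Lp.coeFn_smul b (indicatorConstLp 2 hm₂ hf₂ (1 : ℂ)),
      indicatorConstLp_coeFn (p := 2) (hs := hm₁) (hμs := hf₁) (c := (1:ℂ)),
      indicatorConstLp_coeFn (p := 2) (hs := hm₂) (hμs := hf₂) (c := (1:ℂ))]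
      with x hadd hs₁ hs₂ hi₁ hi₂
    rw [hg, hadd]
    simp only [Pi.add_apply]
    rw [hs₁, hs₂]
    simp only [Pi.smul_apply, smul_eq_mul]
    rw [hi₁, hi₂]
  have hint₁ : Integrable (Set.indicator C₁ (fun _ => (1:ℂ))) ν :=
    ((integrableOn_const_iff (C := (1:ℂ))).mpr (Or.inr (hfin C₁ h₁.1))).integrable_indicator hm₁
  have hint₂ : Integrable (Set.indicator C₂ (fun _ => (1:ℂ))) ν :=
    ((integrableOn_const_iff (C := (1:ℂ))).mpr (Or.inr (hfin C₂ h₂.1))).integrable_indicator hm₂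
  have hgV0 : g ∈ V0 ν B := by
    constructor
    · refine ⟨{C₁, C₂}, fun C => if C = C₁ then a else b, ?_, ?_⟩
      · intro C hC
        rcases Finset.mem_insert.mp hC with rfl | hC
        · exact h₁
        · rw [Finset.mem_singleton.mp hC]; exact h₂
      · filter_upwards [hcoe] with x hx
        rw [hx, Finset.sum_pair hne]
        simp [hne, Ne.symm hne]
    · have : ∫ x, g x ∂ν = a * (ν C₁).toReal + b * (ν C₂).toReal := by
        rw [integral_congr_ae hcoe, integral_add (hint₁.const_mul a) (hint₂.const_mul b),
          integral_const_mul, integral_const_mul, integral_indicator_const _ hm₁,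
          integral_indicator_const _ hm₂]
        simp [mul_comm, measureReal_def]
      rw [this, ha, hb]; push_cast; ring
  have horth := hperp B hB hd g hgV0
  rw [hg, inner_add_left, inner_smul_left, inner_smul_left,
    inner_indicator_ball f hm₁ hf₁, inner_indicator_ball f hm₂ hf₂] at horth
  rw [ha, hb] at horth
  simp only [map_neg, Complex.conj_ofReal] at horth
  set I₁ := ∫ x in C₁, f x ∂ν
  set I₂ := ∫ x in C₂, f x ∂ν
  have : ((ν C₂).toReal : ℂ) * I₁ - ((ν C₁).toReal : ℂ) * I₂ = 0 := by
    rw [← horth]; ring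
  linear_combination this

end core
end


variable {X : Type*} [MetricSpace X]

/-- the key proportionality relation between set integrals of `f` -/
def QRel {X : Type*} [MetricSpace X] [MeasurableSpace X] (ν : Measure X) (f : X → ℂ)
    (R S : Set X) : Prop :=
  ((ν S).toReal : ℂ) * ∫ x in R, f x ∂ν = ((ν R).toReal : ℂ) * ∫ x in S, f x ∂ν

variable [MeasurableSpace X] [BorelSpace X]

lemma setIntegral_zero_of_measure_zero {ν : Measure X} (f : X → ℂ) {R : Set X}
    (h : ν R = 0) : ∫ x in R, f x ∂ν = 0 := by
  rw [Measure.restrict_eq_zero.mpr h, integral_zero_measure]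

lemma QRel_self {ν : Measure X} (f : X → ℂ) (R : Set X) : QRel ν f R R := rfl

lemma QRel_of_zero {ν : Measure X} (f : X → ℂ) {R S : Set X} (hRS : R ⊆ S)
    (h : ν S = 0) : QRel ν f R S := by
  have hR : ν R = 0 := le_antisymm (h ▸ measure_mono hRS) (zero_le)
  unfold QRel
  rw [setIntegral_zero_of_measure_zero f hR, setIntegral_zero_of_measure_zero f h]
  simp [hR, h]

lemma QRel_trans {ν : Measure X} (f : X → ℂ) {R S T : Set X}
    (h₁ : QRel ν f R S) (h₂ : QRel ν f S T) (hS : ν S ≠ 0) (hS' : ν S ≠ ⊤) :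
    QRel ν f R T := by
  unfold QRel at *
  have hne : ((ν S).toReal : ℂ) ≠ 0 := by
    simp [ENNReal.toReal_ne_zero, hS, hS']
  apply mul_left_cancel₀ hne
  calc ((ν S).toReal : ℂ) * (((ν T).toReal : ℂ) * ∫ x in R, f x ∂ν)
      = ((ν T).toReal : ℂ) * (((ν S).toReal : ℂ) * ∫ x in R, f x ∂ν) := by ring
    _ = ((ν T).toReal : ℂ) * (((ν R).toReal : ℂ) * ∫ x in S, f x ∂ν) := by rw [h₁]
    _ = ((ν R).toReal : ℂ) * (((ν S).toReal : ℂ) * ∫ x in T, f x ∂ν) := by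
        rw [← h₂]; ring
    _ = ((ν S).toReal : ℂ) * (((ν R).toReal : ℂ) * ∫ x in T, f x ∂ν) := by ring

section core
variable (hultra : ∀ x y z : X, dist x y ≤ max (dist x z) (dist z y))
    (h2 : ∀ D : ℕ → Set X, (∀ k, IsBall (D k)) → (∀ k, D (k + 1) ⊂ D k) →
      Filter.Tendsto (fun k => Metric.diam (D k)) Filter.atTop (nhds 0))
    (h3 : ∀ B : Set X, IsBall B → 0 < Metric.diam B →
      ∃ F : Finset (Set X), (∀ C ∈ F, IsMaxSubball C B) ∧ B = ⋃ C ∈ F, C)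
    {ν : Measure X} (hfin : ∀ B : Set X, IsBall B → ν B < ⊤)
    (f : Lp ℂ 2 ν)
    (hrel : ∀ B C₁ C₂ : Set X, IsBall B → 0 < Metric.diam B →
      IsMaxSubball C₁ B → IsMaxSubball C₂ B →
      ((ν C₂).toReal : ℂ) * ∫ x in C₁, (f : X → ℂ) x ∂ν
        = ((ν C₁).toReal : ℂ) * ∫ x in C₂, (f : X → ℂ) x ∂ν)

include hultra h3 hfin hrel in
lemma key_ratio {B C : Set X} (hB : IsBall B) (hd : 0 < Metric.diam B)
    (hC : IsMaxSubball C B) : QRel ν (f : X → ℂ) C B := by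
  obtain ⟨F, hF, hcov⟩ := h3 B hB hd
  have hmeas : ∀ C' ∈ F, MeasurableSet C' := fun C' h => ball_measurableSet (hF C' h).1
  have hdisj : (↑F : Set (Set X)).Pairwise (Function.onFun Disjoint (id : Set X → Set X)) :=
    fun C₁ h₁ C₂ h₂ hne => maxSubball_disjoint hultra (hF C₁ h₁) (hF C₂ h₂) hne
  have hIB : ∫ x in B, (f : X → ℂ) x ∂ν = ∑ C' ∈ F, ∫ x in C', (f : X → ℂ) x ∂ν := by
    rw [hcov]
    exact integral_biUnion_finset F hmeas hdisj
      (fun C' h => integrableOn_ball f (hF C' h).1 (hfin _ (hF C' h).1))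
  have hνB : (ν B).toReal = ∑ C' ∈ F, (ν C').toReal := by
    have hm : ν B = ∑ C' ∈ F, ν C' := by
      rw [hcov]; exact measure_biUnion_finset hdisj hmeas
    rw [hm]
    exact ENNReal.toReal_sum (fun C' h => (hfin C' (hF C' h).1).ne)
  unfold QRel
  rw [hIB, hνB]
  push_cast
  rw [Finset.sum_mul, Finset.mul_sum]
  exact Finset.sum_congr rfl (fun C' h => hrel B C C' hB hd hC (hF C' h))

include hultra h2 h3 hfin hrel in
lemma key_mono {C B : Set X} (hC : IsBall C) (hB : IsBall B) (hsub : C ⊆ B) :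
    QRel ν (f : X → ℂ) C B := by
  by_contra hbad
  -- B has positive measure
  have hνB : ν B ≠ 0 := by
    intro h0
    exact hbad (QRel_of_zero _ hsub h0)
  set P : Set X → Prop := fun B' =>
    IsBall B' ∧ C ⊆ B' ∧ ν B' ≠ 0 ∧ QRel ν (f : X → ℂ) B' B
      ∧ ¬ QRel ν (f : X → ℂ) C B' with hPdef
  have hP0 : P B := ⟨hB, hsub, hνB, QRel_self _ _, hbad⟩
  have key : ∀ B', P B' → ∃ B'', P B'' ∧ B'' ⊂ B' := by
    rintro B' ⟨hB', hCB', hνB', hQB', hnQ⟩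
    have hCneB' : C ≠ B' := by
      rintro rfl
      exact hnQ (QRel_self _ _)
    have hCssub : C ⊂ B' := ssubset_of_ne_of_subset hCneB' hCB'
    have hdB' : 0 < Metric.diam B' := by
      obtain ⟨x, hx⟩ := ball_nonempty hC
      obtain ⟨y, hyB', hyC⟩ := Set.exists_of_ssubset hCssub
      have hxy : x ≠ y := fun h => hyC (h ▸ hx)
      have := Metric.dist_le_diam_of_mem (ball_bounded hB') (hCB' hx) hyB'
      have : (0:ℝ) < dist x y := dist_pos.mpr hxy
      linarith [Metric.dist_le_diam_of_mem (ball_bounded hB') (hCB' hx) hyB']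
    obtain ⟨F, hF, hcov⟩ := h3 B' hB' hdB'
    obtain ⟨C', hC'F, hCC'⟩ := subball_le_mem_cover hultra hF hcov hC hCssub
    have hms := hF C' hC'F
    have hQC'B' : QRel ν (f : X → ℂ) C' B' := key_ratio hultra h3 hfin f hrel hB' hdB' hms
    have hνC' : ν C' ≠ 0 := by
      intro h0
      apply hnQ
      have hνC : ν C = 0 := le_antisymm (h0 ▸ measure_mono hCC') (zero_le)
      unfold QRel
      rw [setIntegral_zero_of_measure_zero _ hνC]
      simp [hνC]
    refine ⟨C', ⟨hms.1, hCC', hνC',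
      QRel_trans _ hQC'B' hQB' hνB' (hfin B' hB').ne, ?_⟩, hms.2.1⟩
    intro hQ
    exact hnQ (QRel_trans _ hQ hQC'B' hνC' (hfin C' hms.1).ne)
  -- build the infinite descending sequence
  let g : {B' : Set X // P B'} → {B' : Set X // P B'} := fun B' =>
    ⟨(key B'.1 B'.2).choose, (key B'.1 B'.2).choose_spec.1⟩
  have hg : ∀ B', (g B').1 ⊂ B'.1 := fun B' => (key B'.1 B'.2).choose_spec.2
  let seq : ℕ → {B' : Set X // P B'} := fun n => g^[n] ⟨B, hP0⟩
  have hseq : ∀ n, seq (n + 1) = g (seq n) := fun n => Function.iterate_succ_apply' g n _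
  have hball : ∀ n, IsBall (seq n).1 := fun n => (seq n).2.1
  have hdec : ∀ n, (seq (n+1)).1 ⊂ (seq n).1 := fun n => by rw [hseq]; exact hg (seq n)
  have hanti : Antitone (fun n => (seq n).1) :=
    antitone_nat_of_succ_le (fun n => (hdec n).1)
  have htend := h2 (fun n => (seq n).1) hball hdec
  -- C is a singleton
  have hdC : Metric.diam C ≤ 0 := by
    refine ge_of_tendsto htend (Filter.Eventually.of_forall (fun n => ?_))
    exact Metric.diam_mono (seq n).2.2.1 (ball_bounded (hball n))
  obtain ⟨c, hc⟩ := ball_nonempty hC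
  have hCsing : C = {c} := ball_eq_singleton_of_diam_zero ⟨c, hc⟩ hc hdC (ball_bounded hC)
  -- the intersection of the sequence is C
  have hiInter : (⋂ n, (seq n).1) = C := by
    apply Set.Subset.antisymm
    · intro y hy
      simp only [Set.mem_iInter] at hy
      have hyc : dist y c ≤ 0 := by
        refine ge_of_tendsto htend (Filter.Eventually.of_forall (fun n => ?_))
        exact Metric.dist_le_diam_of_mem (ball_bounded (hball n)) (hy n)
          ((seq n).2.2.1 hc)
      have : y = c := by
        have := le_antisymm hyc dist_nonneg
        exact dist_eq_zero.mp this
      rw [hCsing, this]; rfl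
    · exact Set.subset_iInter (fun n => (seq n).2.2.1)
  -- limits
  have hmeaslim : Filter.Tendsto (fun n => ν (seq n).1) Filter.atTop (nhds (ν C)) := by
    have := tendsto_measure_iInter_atTop (μ := ν)
      (fun n => (ball_measurableSet (hball n)).nullMeasurableSet) hanti
      ⟨0, (hfin _ (hball 0)).ne⟩
    rwa [hiInter] at this
  have hintlim : Filter.Tendsto (fun n => ∫ x in (seq n).1, (f : X → ℂ) x ∂ν)
      Filter.atTop (nhds (∫ x in C, (f : X → ℂ) x ∂ν)) := by
    have := tendsto_setIntegral_of_antitone (f := (f : X → ℂ)) (μ := ν)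
      (fun n => ball_measurableSet (hball n)) hanti
      ⟨0, integrableOn_ball f (hball 0) (hfin _ (hball 0))⟩
    rwa [hiInter] at this
  have hQn : ∀ n, ((ν B).toReal : ℂ) * ∫ x in (seq n).1, (f : X → ℂ) x ∂ν
      = ((ν (seq n).1).toReal : ℂ) * ∫ x in B, (f : X → ℂ) x ∂ν :=
    fun n => (seq n).2.2.2.2.1
  have hlim1 : Filter.Tendsto
      (fun n => ((ν B).toReal : ℂ) * ∫ x in (seq n).1, (f : X → ℂ) x ∂ν)
      Filter.atTop (nhds (((ν B).toReal : ℂ) * ∫ x in C, (f : X → ℂ) x ∂ν)) :=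
    hintlim.const_mul _
  have hlim2 : Filter.Tendsto
      (fun n => ((ν (seq n).1).toReal : ℂ) * ∫ x in B, (f : X → ℂ) x ∂ν)
      Filter.atTop (nhds (((ν C).toReal : ℂ) * ∫ x in B, (f : X → ℂ) x ∂ν)) := by
    refine Filter.Tendsto.mul_const _ ?_
    refine Filter.Tendsto.comp (Continuous.tendsto Complex.continuous_ofReal _) ?_
    exact (ENNReal.tendsto_toReal (hfin C hC).ne).comp hmeaslim
  have := tendsto_nhds_unique (hlim1.congr (fun n => (hQn n))) hlim2
  exact hbad this

include hultra h2 h3 hfin hrel in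
lemma integral_ball_zero
    (hsup : (⨆ (B : Set X) (_ : IsBall B), ν B) = ⊤)
    {C : Set X} (hC : IsBall C) : ∫ x in C, (f : X → ℂ) x ∂ν = 0 := by
  set K : ℝ := (ν C).toReal * ‖f‖ with hK
  have hK0 : 0 ≤ K := mul_nonneg ENNReal.toReal_nonneg (norm_nonneg _)
  have hbound : ∀ t : ℝ, 1 ≤ t → ‖∫ x in C, (f : X → ℂ) x ∂ν‖ ≤ K / Real.sqrt t := by
    intro t ht
    -- find a ball of measure > ofReal t
    have h1 : (ENNReal.ofReal t) < ⨆ (B : Set X) (_ : IsBall B), ν B := by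
      rw [hsup]; exact ENNReal.ofReal_lt_top
    obtain ⟨D, hD⟩ := lt_iSup_iff.mp h1
    obtain ⟨hDball, hDν⟩ := lt_iSup_iff.mp hD
    obtain ⟨E, hEball, hCE, hDE⟩ := exists_ball_superset hultra hC hDball
    have hνE : ENNReal.ofReal t < ν E := lt_of_lt_of_le hDν (measure_mono hDE)
    have hEfin := hfin E hEball
    have htE : t ≤ (ν E).toReal := by
      rw [← ENNReal.ofReal_le_iff_le_toReal hEfin.ne] at *
      exact (ENNReal.ofReal_le_ofReal le_rfl).trans hνE.le
    have htpos : (0:ℝ) < t := lt_of_lt_of_le one_pos ht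
    have hEpos : (0:ℝ) < (ν E).toReal := lt_of_lt_of_le htpos htE
    have hQ := key_mono hultra h2 h3 hfin f hrel hC hEball hCE
    unfold QRel at hQ
    have hnorm : (ν E).toReal * ‖∫ x in C, (f : X → ℂ) x ∂ν‖
        = (ν C).toReal * ‖∫ x in E, (f : X → ℂ) x ∂ν‖ := by
      have := congrArg norm hQ
      simpa [Complex.norm_real, abs_of_nonneg ENNReal.toReal_nonneg,
        Real.norm_eq_abs, norm_mul] using this
    have hIE : ‖∫ x in E, (f : X → ℂ) x ∂ν‖ ≤ ((ν E).toReal) ^ (1/2 : ℝ) * ‖f‖ :=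
      norm_setIntegral_ball_le f (ball_measurableSet hEball) hEfin.ne
    have hrpow : ((ν E).toReal) ^ (1/2 : ℝ) = Real.sqrt ((ν E).toReal) :=
      (Real.sqrt_eq_rpow _).symm
    have hchain : (ν E).toReal * ‖∫ x in C, (f : X → ℂ) x ∂ν‖
        ≤ K * Real.sqrt ((ν E).toReal) := by
      rw [hnorm, hK]
      rw [hrpow] at hIE
      calc (ν C).toReal * ‖∫ x in E, (f : X → ℂ) x ∂ν‖
          ≤ (ν C).toReal * (Real.sqrt ((ν E).toReal) * ‖f‖) := by
            exact mul_le_mul_of_nonneg_left hIE ENNReal.toReal_nonneg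
        _ = (ν C).toReal * ‖f‖ * Real.sqrt ((ν E).toReal) := by ring
    -- divide
    have hsqrtE : (0:ℝ) < Real.sqrt ((ν E).toReal) := Real.sqrt_pos.mpr hEpos
    have h5 : ‖∫ x in C, (f : X → ℂ) x ∂ν‖ ≤ K / Real.sqrt ((ν E).toReal) := by
      rw [le_div_iff₀ hsqrtE]
      nlinarith [hchain, Real.sq_sqrt hEpos.le, hsqrtE, norm_nonneg (∫ x in C, (f : X → ℂ) x ∂ν)]
    refine h5.trans ?_
    apply div_le_div_of_nonneg_left hK0 (Real.sqrt_pos.mpr htpos)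
    exact Real.sqrt_le_sqrt htE
  -- conclude
  by_contra hne
  have hpos : 0 < ‖∫ x in C, (f : X → ℂ) x ∂ν‖ := norm_pos_iff.mpr hne
  set a := ‖∫ x in C, (f : X → ℂ) x ∂ν‖ with hadef
  obtain ⟨t, ht1, ht2⟩ : ∃ t : ℝ, 1 ≤ t ∧ K / Real.sqrt t < a := by
    refine ⟨max 1 ((K/a)^2 + 1), le_max_left _ _, ?_⟩
    have h2' : (K/a)^2 < max 1 ((K/a)^2 + 1) := lt_of_lt_of_le (by linarith) (le_max_right _ _)
    have hst : K/a < Real.sqrt (max 1 ((K/a)^2 + 1)) := by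
      have := Real.sqrt_lt_sqrt (sq_nonneg _) h2'
      rwa [Real.sqrt_sq (div_nonneg hK0 hpos.le)] at this
    have hs1 : (0:ℝ) < Real.sqrt (max 1 ((K/a)^2 + 1)) :=
      Real.sqrt_pos.mpr (lt_of_lt_of_le one_pos (le_max_left _ _))
    rw [div_lt_iff₀ hs1]
    rw [div_lt_iff₀ hpos] at hst
    linarith [hst]
  exact absurd (hbound t ht1) (not_le.mpr ht2)

end core


variable {X : Type*} [MetricSpace X]

variable [MeasurableSpace X] [BorelSpace X]

/-- a real-valued integrable function whose integral on every ball vanishes is a.e. zero,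
for finite measures, provided balls generate the σ-algebra -/
lemma real_ae_zero_of_ball_integrals_zero
    (hgen : ‹MeasurableSpace X› = MeasurableSpace.generateFrom {B : Set X | IsBall B})
    (hpi : IsPiSystem {B : Set X | IsBall B})
    (μ : Measure X) [IsFiniteMeasure μ] (u : X → ℝ) (hu : Integrable u μ)
    (htot : ∫ x, u x ∂μ = 0)
    (hz : ∀ C : Set X, IsBall C → ∫ x in C, u x ∂μ = 0) :
    u =ᵐ[μ] 0 := by
  set μ₁ : Measure X := μ.withDensity (fun x => ENNReal.ofReal (u x)) with hμ₁
  set μ₂ : Measure X := μ.withDensity (fun x => ENNReal.ofReal (-u x)) with hμ₂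
  have hfin₁ : ∀ s : Set X, MeasurableSet s → μ₁ s < ⊤ := by
    intro s hs
    rw [hμ₁, withDensity_apply _ hs]
    refine lt_of_le_of_lt (lintegral_mono_set (Set.subset_univ s)) ?_
    rw [setLIntegral_univ]
    refine lt_of_le_of_lt (lintegral_mono (fun x => ?_)) hu.2
    simp only [← ofReal_norm, Real.norm_eq_abs]
    exact ENNReal.ofReal_le_ofReal (le_abs_self _)
  have hfin₂ : ∀ s : Set X, MeasurableSet s → μ₂ s < ⊤ := by
    intro s hs
    rw [hμ₂, withDensity_apply _ hs]
    refine lt_of_le_of_lt (lintegral_mono_set (Set.subset_univ s)) ?_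
    rw [setLIntegral_univ]
    refine lt_of_le_of_lt (lintegral_mono (fun x => ?_)) hu.neg.2
    simp only [← ofReal_norm, Real.norm_eq_abs, Pi.neg_apply]
    exact ENNReal.ofReal_le_ofReal (le_abs_self _)
  -- set integrals as difference of the two densities
  have hdiff : ∀ s : Set X, MeasurableSet s →
      ∫ x in s, u x ∂μ = (μ₁ s).toReal - (μ₂ s).toReal := by
    intro s hs
    rw [integral_eq_lintegral_pos_part_sub_lintegral_neg_part (hu.restrict (s := s)),
      hμ₁, hμ₂, withDensity_apply _ hs, withDensity_apply _ hs]
  have hEq : μ₁ = μ₂ := by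
    haveI : IsFiniteMeasure μ₁ := ⟨hfin₁ _ MeasurableSet.univ⟩
    haveI : IsFiniteMeasure μ₂ := ⟨hfin₂ _ MeasurableSet.univ⟩
    refine MeasureTheory.ext_of_generate_finite {B : Set X | IsBall B} hgen hpi ?_ ?_
    · intro C hC
      have hmC := ball_measurableSet hC
      have := hdiff C hmC
      rw [hz C hC] at this
      have h' : (μ₁ C).toReal = (μ₂ C).toReal := by linarith
      exact (ENNReal.toReal_eq_toReal_iff' (hfin₁ C hmC).ne (hfin₂ C hmC).ne).mp h'
    · have := hdiff Set.univ MeasurableSet.univ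
      rw [Measure.restrict_univ] at this
      rw [htot] at this
      have h' : (μ₁ Set.univ).toReal = (μ₂ Set.univ).toReal := by linarith
      exact (ENNReal.toReal_eq_toReal_iff' (hfin₁ _ MeasurableSet.univ).ne
        (hfin₂ _ MeasurableSet.univ).ne).mp h'
  refine hu.ae_eq_zero_of_forall_setIntegral_eq_zero (fun s hs _ => ?_)
  rw [hdiff s hs, hEq]
  ring

lemma complex_restrict_ae_zero
    (hultra : ∀ x y z : X, dist x y ≤ max (dist x z) (dist z y))
    (hgen : ‹MeasurableSpace X› = MeasurableSpace.generateFrom {B : Set X | IsBall B})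
    (hpi : IsPiSystem {B : Set X | IsBall B})
    {ν : Measure X} (hfin : ∀ B : Set X, IsBall B → ν B < ⊤)
    (f : Lp ℂ 2 ν)
    (hz : ∀ C : Set X, IsBall C → ∫ x in C, (f : X → ℂ) x ∂ν = 0)
    {B : Set X} (hB : IsBall B) :
    (f : X → ℂ) =ᵐ[ν.restrict B] 0 := by
  set μ := ν.restrict B with hμ
  haveI : IsFiniteMeasure μ :=
    ⟨by rw [hμ, Measure.restrict_apply_univ]; exact hfin B hB⟩
  have hint : Integrable (f : X → ℂ) μ := integrableOn_ball f hB (hfin B hB)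
  -- integral over any ball w.r.t. μ is zero
  have hz' : ∀ C : Set X, IsBall C → ∫ x in C, (f : X → ℂ) x ∂μ = 0 := by
    intro C hC
    rw [hμ, Measure.restrict_restrict (ball_measurableSet hC)]
    rcases Set.eq_empty_or_nonempty (C ∩ B) with he | hne
    · rw [he]; simp
    · rcases ball_nested hultra hC hB hne with h | h
      · rw [Set.inter_eq_self_of_subset_left h]; exact hz C hC
      · rw [Set.inter_eq_self_of_subset_right h]; exact hz B hB
  have htot : ∫ x, (f : X → ℂ) x ∂μ = 0 := by
    have := hz' B hB
    rwa [hμ, Measure.restrict_restrict (ball_measurableSet hB), Set.inter_self, ← hμ] at this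
  have hre : (fun x => ((f : X → ℂ) x).re) =ᵐ[μ] 0 := by
    refine real_ae_zero_of_ball_integrals_zero hgen hpi μ _ hint.re ?_ ?_
    · have h := integral_re (𝕜 := ℂ) hint
      rw [htot] at h
      simpa [RCLike.re_to_complex] using h
    · intro C hC
      have h := integral_re (𝕜 := ℂ) (hint.restrict (s := C))
      rw [hz' C hC] at h
      simpa [RCLike.re_to_complex] using h
  have him : (fun x => ((f : X → ℂ) x).im) =ᵐ[μ] 0 := by
    refine real_ae_zero_of_ball_integrals_zero hgen hpi μ _ hint.im ?_ ?_
    · have h := integral_im (𝕜 := ℂ) hint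
      rw [htot] at h
      simpa [RCLike.im_to_complex] using h
    · intro C hC
      have h := integral_im (𝕜 := ℂ) (hint.restrict (s := C))
      rw [hz' C hC] at h
      simpa [RCLike.im_to_complex] using h
  filter_upwards [hre, him] with x h1 h2
  simp only [Pi.zero_apply] at h1 h2 ⊢
  exact Complex.ext h1 h2


end Aux

/-- If the ultrametric space `X` (complete, with the countability,
decreasing-diameter and finite-branching conditions) carries a Borel measure `ν`
finite on balls whose supremum over all balls is infinite, then the closed linear
span of the union of the spaces `V⁰_B` over all balls `B` of nonzero diameter is
all of `L²(X,ν)`. -/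
theorem stmt_8 {X : Type*} [MetricSpace X] [CompleteSpace X]
    [MeasurableSpace X] [BorelSpace X]
    (hultra : ∀ x y z : X, dist x y ≤ max (dist x z) (dist z y))
    (h1 : {B : Set X | IsBall B ∧ 0 < Metric.diam B}.Countable)
    (h2 : ∀ D : ℕ → Set X, (∀ k, IsBall (D k)) → (∀ k, D (k + 1) ⊂ D k) →
      Filter.Tendsto (fun k => Metric.diam (D k)) Filter.atTop (nhds 0))
    (h3 : ∀ B : Set X, IsBall B → 0 < Metric.diam B →
      ∃ F : Finset (Set X), (∀ C ∈ F, IsMaxSubball C B) ∧ B = ⋃ C ∈ F, C)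
    (ν : Measure X)
    (hfin : ∀ B : Set X, IsBall B → ν B < ⊤)
    (hsup : (⨆ (B : Set X) (_ : IsBall B), ν B) = ⊤) :
    (Submodule.span ℂ
        (⋃ B ∈ {B : Set X | IsBall B ∧ 0 < Metric.diam B}, V0 ν B)).topologicalClosure
      = ⊤ := by
  rw [Submodule.topologicalClosure_eq_top_iff, Submodule.eq_bot_iff]
  intro f hf
  have hperp : ∀ B : Set X, IsBall B → 0 < Metric.diam B →
      ∀ g ∈ V0 ν B, (inner ℂ g f : ℂ) = 0 := by
    intro B hB hd g hg
    refine (Submodule.mem_orthogonal _ f).mp hf g ?_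
    exact Submodule.subset_span (Set.mem_biUnion ⟨hB, hd⟩ hg)
  -- nontriviality of X
  have hnt : ∀ x : X, ∃ y, y ≠ x := by
    by_contra h
    push_neg at h
    obtain ⟨x, hx⟩ := h
    have hb : ∀ B : Set X, IsBall B → ν B ≤ ν {x} :=
      fun B _ => measure_mono (fun y _ => (hx y : y = x) ▸ rfl)
    have hle : (⨆ (B : Set X) (_ : IsBall B), ν B) ≤ ν {x} :=
      iSup_le fun B => iSup_le fun hB => hb B hB
    rw [hsup, top_le_iff] at hle
    have : ν {x} < ⊤ := hfin {x} ⟨x, 0, le_rfl, by simp⟩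
    rw [hle] at this
    exact absurd this (lt_irrefl _)
  have hrel : ∀ B C₁ C₂ : Set X, IsBall B → 0 < Metric.diam B →
      IsMaxSubball C₁ B → IsMaxSubball C₂ B →
      ((ν C₂).toReal : ℂ) * ∫ x in C₁, (f : X → ℂ) x ∂ν
        = ((ν C₁).toReal : ℂ) * ∫ x in C₂, (f : X → ℂ) x ∂ν :=
    fun B C₁ C₂ hB hd h₁' h₂' => key_pair hultra hfin f hperp hB hd h₁' h₂'
  have hz : ∀ C : Set X, IsBall C → ∫ x in C, (f : X → ℂ) x ∂ν = 0 :=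
    fun C hC => integral_ball_zero hultra h2 h3 hfin f hrel hsup hC
  have hiso := isolated_countable hultra h2 h3 h1 hnt
  have hgen := borel_eq_generateFrom_balls h1 hiso
  have hpi := isPiSystem_balls hultra
  have hres : ∀ B ∈ {B : Set X | IsBall B ∧ 0 < Metric.diam B},
      ∀ᵐ x ∂ν, x ∈ B → (f : X → ℂ) x = 0 := by
    intro B hB
    have h' := complex_restrict_ae_zero hultra hgen hpi hfin f hz hB.1
    exact (ae_restrict_iff' (ball_measurableSet hB.1)).mp h'
  have hae : (f : X → ℂ) =ᵐ[ν] 0 := by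
    have hall := (ae_ball_iff h1).mpr hres
    filter_upwards [hall] with x hx
    obtain ⟨B, hB, hxB⟩ := point_mem_posdiam_ball (hnt x).choose_spec
    exact hx B hB hxB
  exact (MeasureTheory.Lp.eq_zero_iff_ae_eq_zero).mpr hae
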